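/- Let α be a type and u, v nonempty words (lists) over α. If the bi-infinite periodic words determined by u and v coincide, i.e., if the functions ℤ → α given by i ↦ u.get (i mod |u|) and i ↦ v.get (i mod |v|) are equal, then u and v are both powers of a common word: there exists a nonempty word w and integers a, b ≥ 1 with u = w^a and v = w^b. -/

import Mathlib

def listPow {α : Type*} (w : List α) (a : ℕ) : List α :=
  (List.replicate a w).flatten

lemma length_listPow {α : Type*} (w : List α) (a : ℕ) :
    (listPow w a).length = a * w.length := by
  simp [listPow, List.length_flatten, Function.comp]

lemma getElem_listPow {α : Type*} (w : List α) (a : ℕ) (k : ℕ)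
    (hk : k < (listPow w a).length) (hm : k % w.length < w.length) :
    (listPow w a)[k] = w[k % w.length] := by
  have e : listPow w a = List.ofFn (Fin.repeat a (fun j : Fin w.length => w[j])) := by
    rw [List.ofFn_fin_repeat]; simp [List.ofFn_getElem, listPow]
  rw [List.getElem_of_eq e, List.getElem_ofFn]
  simp [Fin.repeat, Fin.modNat]

/-- If the bi-infinite periodic words `i ↦ u.get (i mod |u|)` and `i ↦ v.get (i mod |v|)`
determined by two nonempty words `u` and `v` coincide, then `u` and `v` are powers of a
common nonempty word. -/
theorem stmt_6 {α : Type*} (u v : List α) (hu : u ≠ []) (hv : v ≠ [])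
    (h : (fun i : ℤ => u.getD (i % (u.length : ℤ)).toNat (u.head hu))
       = (fun i : ℤ => v.getD (i % (v.length : ℤ)).toNat (v.head hv))) :
    ∃ (w : List α) (a b : ℕ), w ≠ [] ∧ 1 ≤ a ∧ 1 ≤ b ∧
      u = listPow w a ∧ v = listPow w b := by
  set m := u.length with hm
  set n := v.length with hn
  have mpos : 0 < m := List.length_pos_iff.mpr hu
  have npos : 0 < n := List.length_pos_iff.mpr hv
  set f : ℤ → α := fun i : ℤ => u.getD (i % (m : ℤ)).toNat (u.head hu) with hf
  have hfv : ∀ i : ℤ, f i = v.getD (i % (n : ℤ)).toNat (v.head hv) := fun i => congrFun h i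
  -- f at natural k < m is u[k]
  have hfu' : ∀ k : ℕ, (hk : k < m) → f k = u[k] := by
    intro k hk
    have h1 : (k : ℤ) % (m : ℤ) = (k : ℤ) := Int.emod_eq_of_lt (by positivity) (by exact_mod_cast hk)
    simp only [hf, h1, Int.toNat_natCast]
    exact List.getD_eq_getElem u _ hk
  have hfv' : ∀ k : ℕ, (hk : k < n) → f k = v[k] := by
    intro k hk
    have h1 : (k : ℤ) % (n : ℤ) = (k : ℤ) := Int.emod_eq_of_lt (by positivity) (by exact_mod_cast hk)
    rw [hfv k, h1, Int.toNat_natCast]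
    exact List.getD_eq_getElem v _ hk
  -- periodicity with period m*x and n*y
  have hpm : ∀ (i x : ℤ), f (i + m * x) = f i := by
    intro i x
    simp only [hf, Int.add_mul_emod_self_left]
  have hpn : ∀ (i y : ℤ), f (i + n * y) = f i := by
    intro i y
    rw [hfv, hfv, Int.add_mul_emod_self_left]
  set g := Nat.gcd m n with hg
  have gpos : 0 < g := Nat.gcd_pos_of_pos_left n mpos
  have hgm : g ∣ m := Nat.gcd_dvd_left m n
  have hgn : g ∣ n := Nat.gcd_dvd_right m n
  have hpg : ∀ i : ℤ, f (i + g) = f i := by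
    intro i
    have bez : (g : ℤ) = m * Int.gcdA m n + n * Int.gcdB m n := by
      have := Int.gcd_eq_gcd_ab (m : ℤ) (n : ℤ)
      simpa [Int.gcd_natCast_natCast] using this
    rw [bez, ← add_assoc, hpn, hpm]
  -- iterate period
  have hpgt : ∀ (t : ℕ) (i : ℤ), f (i + g * t) = f i := by
    intro t
    induction t with
    | zero => simp
    | succ t ih =>
      intro i
      have : i + (g : ℤ) * (t + 1 : ℕ) = (i + g) + g * t := by push_cast; ring
      rw [this, ih, hpg]
  have hmodg : ∀ k : ℕ, f (k : ℤ) = f (((k % g : ℕ) : ℤ)) := by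
    intro k
    have e : (k : ℤ) = ((k % g : ℕ) : ℤ) + (g : ℤ) * ((k / g : ℕ) : ℤ) := by
      exact_mod_cast (Nat.mod_add_div k g).symm
    conv_lhs => rw [e]
    exact hpgt _ _
  set w := u.take g with hw
  have hwlen : w.length = g := by
    rw [hw, List.length_take]
    exact min_eq_left (Nat.le_of_dvd mpos hgm)
  have hwne : w ≠ [] := by
    intro hc
    rw [hc] at hwlen
    simp at hwlen
    omega
  have hwu : ∀ j : ℕ, (hj : j < g) → w[j]'(hwlen ▸ hj) = u[j]'(lt_of_lt_of_le hj (Nat.le_of_dvd mpos hgm)) := by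
    intro j hj
    simp [hw, List.getElem_take]
  -- general: a list whose entries are f is a power of w
  have key : ∀ (s : List α), s.length ≠ 0 → g ∣ s.length →
      (∀ k : ℕ, (hk : k < s.length) → s[k] = f k) → s = listPow w (s.length / g) := by
    intro s hs hdvd hsf
    apply List.ext_getElem
    · rw [length_listPow, hwlen, Nat.div_mul_cancel hdvd]
    · intro k hk1 hk2
      have hkg : k % g < g := Nat.mod_lt _ gpos
      rw [getElem_listPow w _ k hk2 (hwlen ▸ hkg)]
      rw [hsf k hk1]
      rw [hmodg k]
      have hkgm : k % g < m := lt_of_lt_of_le hkg (Nat.le_of_dvd mpos hgm)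
      rw [hfu' (k % g) hkgm]
      simp [hw, List.getElem_take, List.length_take, min_eq_left (Nat.le_of_dvd mpos hgm)]
      simp only [show min g u.length = g from min_eq_left (Nat.le_of_dvd mpos hgm)]
  refine ⟨w, m / g, n / g, hwne, ?_, ?_, ?_, ?_⟩
  · exact Nat.one_le_div_iff gpos |>.mpr (Nat.le_of_dvd mpos hgm)
  · exact Nat.one_le_div_iff gpos |>.mpr (Nat.le_of_dvd npos hgn)
  · exact key u (by omega) hgm (fun k hk => (hfu' k hk).symm)
  · exact key v (by omega) hgn (fun k hk => (hfv' k hk).symm)
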